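/- Let p,q > 0 with p+q < 1, ζ = (1-4pq)^{-1/2}, ξ₁ > 1 > ξ₂ > 0 roots of qξ²-ξ+p=0, r > 0. Define f_{n,1} = (∓n+ζ)rζ²ξᵢⁿ as before and f_{n,2} = ½(n²-3ζn+3ζ²-1)r²ζ³ξ₁ⁿ for n ≤ 0, f_{n,2} = ½(n²+3ζn+3ζ²-1)r²ζ³ξ₂ⁿ for n ≥ 0. Then for all n ∈ ℤ: f_{n,2} = p·f_{n-1,2} + q·f_{n+1,2} + r·f_{n,1}. -/
import Mathlib

lemma branch_rec (p q r ζ ξ ε : ℝ) (hξ : q * ξ ^ 2 - ξ + p = 0) (hξ0 : ξ ≠ 0)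
    (hkey : ζ * (2 * q * ξ - 1) = ε) (hε : ε ^ 2 = 1) (n : ℤ) :
    (1/2) * ((n : ℝ) ^ 2 - 3 * ε * ζ * n + 3 * ζ ^ 2 - 1) * r ^ 2 * ζ ^ 3 * ξ ^ n
      = p * ((1/2) * (((n : ℝ) - 1) ^ 2 - 3 * ε * ζ * ((n : ℝ) - 1) + 3 * ζ ^ 2 - 1) * r ^ 2 * ζ ^ 3 * ξ ^ (n - 1))
      + q * ((1/2) * (((n : ℝ) + 1) ^ 2 - 3 * ε * ζ * ((n : ℝ) + 1) + 3 * ζ ^ 2 - 1) * r ^ 2 * ζ ^ 3 * ξ ^ (n + 1))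
      + r * ((ζ - ε * (n : ℝ)) * r * ζ ^ 2 * ξ ^ n) := by
  have e : n - 1 + 1 = n := by ring
  have hn : ξ ^ n = ξ ^ (n - 1) * ξ := by rw [← e, zpow_add_one₀ hξ0]; rw [e]
  have hn1 : ξ ^ (n + 1) = ξ ^ (n - 1) * ξ ^ 2 := by
    rw [show n + 1 = (n - 1) + 1 + 1 by ring, zpow_add_one₀ hξ0, zpow_add_one₀ hξ0]; ring
  rw [hn, hn1]
  set a := ξ ^ (n - 1) with ha
  set N := (n : ℝ) with hN
  linear_combination (r^2 * ζ^2 * a / 2) *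
    ((-(ζ * (N^2 - 3*ε*ζ*N + 3*ζ^2 + 2*N - 3*ε*ζ)) + 4*N*ζ - 6*ε*ζ^2) * hξ
      + ((-2*N + 3*ε*ζ) * ξ) * hkey + (3*ζ*ξ) * hε)

theorem layer2_recurrence
    (p q r : ℝ) (hp : 0 < p) (hq : 0 < q) (hpq : p + q < 1) (hr : 0 < r)
    (ζ ξ₁ ξ₂ : ℝ)
    (hζ : ζ = (1 - 4 * p * q) ^ (-(1:ℝ)/2))
    (hξ₁ : q * ξ₁ ^ 2 - ξ₁ + p = 0) (hξ₂ : q * ξ₂ ^ 2 - ξ₂ + p = 0)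
    (h1 : ξ₁ > 1) (h2 : 1 > ξ₂) (h3 : ξ₂ > 0)
    (f₁ f₂ : ℤ → ℝ)
    (hf₁ : ∀ n : ℤ, f₁ n = if n ≤ 0 then (-n + ζ) * r * ζ ^ 2 * ξ₁ ^ n
                           else (n + ζ) * r * ζ ^ 2 * ξ₂ ^ n)
    (hf₂ : ∀ n : ℤ, f₂ n = if n ≤ 0 then
                             (1/2) * ((n : ℝ) ^ 2 - 3 * ζ * n + 3 * ζ ^ 2 - 1) * r ^ 2 * ζ ^ 3 * ξ₁ ^ n
                           else
                             (1/2) * ((n : ℝ) ^ 2 + 3 * ζ * n + 3 * ζ ^ 2 - 1) * r ^ 2 * ζ ^ 3 * ξ₂ ^ n) :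
    ∀ n : ℤ, f₂ n = p * f₂ (n - 1) + q * f₂ (n + 1) + r * f₁ n := by
  have hξ₁0 : ξ₁ ≠ 0 := by linarith
  have hξ₂0 : ξ₂ ≠ 0 := ne_of_gt h3
  have hd : ξ₁ - ξ₂ ≠ 0 := by intro h; nlinarith
  have hsum : q * (ξ₁ + ξ₂) = 1 := by
    have h : (q * (ξ₁ + ξ₂) - 1) * (ξ₁ - ξ₂) = 0 := by linear_combination hξ₁ - hξ₂
    rcases mul_eq_zero.mp h with h' | h'
    · linarith
    · exact absurd h' hd
  have hprod : q * ξ₁ * ξ₂ = p := by linear_combination ξ₁ * hsum - hξ₁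
  set s : ℝ := q * (ξ₁ - ξ₂) with hs_def
  have hspos : 0 < s := by
    have : 0 < ξ₁ - ξ₂ := by linarith
    positivity
  have hs2 : s ^ 2 = 1 - 4 * p * q := by
    linear_combination (q * (ξ₁ + ξ₂) + 1) * hsum + (-4 * q) * hprod
  have hζval : ζ = s⁻¹ := by
    rw [hζ, show (1 : ℝ) - 4 * p * q = s ^ 2 from hs2.symm,
      ← Real.rpow_natCast s 2, ← Real.rpow_mul hspos.le]
    norm_num
    rw [Real.rpow_neg_one]
  have hζs : ζ * s = 1 := by rw [hζval]; exact inv_mul_cancel₀ (ne_of_gt hspos)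
  have hkey₁ : ζ * (2 * q * ξ₁ - 1) = 1 := by
    have h : 2 * q * ξ₁ - 1 = s := by rw [hs_def]; linear_combination hsum
    rw [h]; exact hζs
  have hkey₂ : ζ * (2 * q * ξ₂ - 1) = -1 := by
    have h : 2 * q * ξ₂ - 1 = -s := by rw [hs_def]; linear_combination hsum
    rw [h]; linarith [hζs]
  have hpI : p * ξ₁⁻¹ = 1 - q * ξ₁ := by
    field_simp
    linear_combination hξ₁
  intro n
  rw [hf₂ n, hf₂ (n - 1), hf₂ (n + 1), hf₁ n]
  by_cases hn : n ≤ 0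
  · by_cases hn0 : n = 0
    · subst hn0
      norm_num
      have hζs' : ζ * (q * (ξ₁ - ξ₂)) = 1 := by rw [← hs_def]; exact hζs
      linear_combination (r^2 * ζ^3 / 2) * (-(3*ζ^2 + 3*ζ) * hpI + 3 * (ζ + 1) * hζs')
    · have h1' : n - 1 ≤ 0 := by omega
      have h2' : n + 1 ≤ 0 := by omega
      rw [if_pos hn, if_pos h1', if_pos h2', if_pos hn]
      push_cast
      linear_combination branch_rec p q r ζ ξ₁ 1 hξ₁ hξ₁0 hkey₁ (by norm_num) n
  · by_cases hn1 : n = 1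
    · subst hn1
      norm_num
      have h := branch_rec p q r ζ ξ₂ (-1) hξ₂ hξ₂0 hkey₂ (by norm_num) 1
      norm_num at h
      linear_combination h
    · have h1' : ¬ (n - 1 ≤ 0) := by omega
      have h2' : ¬ (n + 1 ≤ 0) := by omega
      rw [if_neg hn, if_neg h1', if_neg h2', if_neg hn]
      push_cast
      linear_combination branch_rec p q r ζ ξ₂ (-1) hξ₂ hξ₂0 hkey₂ (by norm_num) n
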